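/- arXiv:1510.07189 — 4 statements merged into one kernel-verified Lean document; each statement's English description precedes it below -/
import Mathlib

section
/- Let n ∈ ℕ and d, p ∈ ℝⁿ with p ≠ 0. Then: (a) ⟨d−zp, d−zp⟩ = ‖p‖²·(w−z)·(w̄−z) for all z ∈ ℂ; (b) for every z ∈ U_dp one has ⟨d−zp, d−zp⟩ ∉ ℝ_{≤0}; (c) the function n_dp : U_dp → ℂ defined by n_dp(z) := √(⟨d−zp, d−zp⟩) = ‖p‖·√((w−z)(w̄−z)) is well-defined, holomorphic on U_dp, and takes values in the right half-plane ℂ₊ := {z ∈ ℂ : Re z > 0}. -/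
open Complex Set

/-- The principal branch of the complex square root,
`√z := √|z| · (z+|z|)/|z+|z||`. -/
noncomputable def csqrt (z : ℂ) : ℂ :=
  (Real.sqrt ‖z‖ : ℂ) *
    ((z + (‖z‖ : ℂ)) / ((‖z + (‖z‖ : ℂ)‖ : ℝ) : ℂ))

/-- The Euclidean norm on `ℝⁿ`. -/
noncomputable def euclNorm {n : ℕ} (x : Fin n → ℝ) : ℝ := Real.sqrt (∑ j, (x j) ^ 2)

lemma aux_ne_zero {z : ℂ} (h : 0 < z.re ∨ z.im ≠ 0) : z ≠ 0 := by
  rintro rfl; simp at h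

lemma aux_re_add_abs_pos {z : ℂ} (h : 0 < z.re ∨ z.im ≠ 0) : 0 < z.re + ‖z‖ := by
  rcases h with h | h
  · have := norm_nonneg z; linarith
  · have h1 : |z.re| < ‖z‖ := Complex.abs_re_lt_norm.mpr h
    have := neg_abs_le z.re
    linarith

lemma aux_add_abs_ne_zero {z : ℂ} (h : 0 < z.re ∨ z.im ≠ 0) :
    z + (‖z‖ : ℂ) ≠ 0 := by
  intro hc
  have : (z + (‖z‖ : ℂ)).re = 0 := by rw [hc]; simp
  simp only [Complex.add_re, Complex.ofReal_re] at this
  have := aux_re_add_abs_pos h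
  linarith

lemma csqrt_re_pos {z : ℂ} (h : 0 < z.re ∨ z.im ≠ 0) : 0 < (csqrt z).re := by
  have hz0 := aux_ne_zero h
  have hb : 0 < ‖z + (‖z‖ : ℂ)‖ :=
    norm_pos_iff.mpr (aux_add_abs_ne_zero h)
  have habs : 0 < ‖z‖ := norm_pos_iff.mpr hz0
  rw [csqrt, Complex.re_ofReal_mul, Complex.div_ofReal_re]
  have : 0 < (z + (‖z‖ : ℂ)).re := by
    simpa using aux_re_add_abs_pos h
  positivity

lemma csqrt_sq {z : ℂ} (h : 0 < z.re ∨ z.im ≠ 0) : csqrt z * csqrt z = z := by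
  have hz0 := aux_ne_zero h
  have hne := aux_add_abs_ne_zero h
  have hb : (‖z + (‖z‖ : ℂ)‖ : ℂ) ≠ 0 := by
    simpa using norm_ne_zero_iff.mpr hne
  have hsq : ((Real.sqrt (‖z‖) : ℝ) : ℂ) * ((Real.sqrt (‖z‖) : ℝ) : ℂ)
      = ((‖z‖ : ℝ) : ℂ) := by
    rw [← Complex.ofReal_mul, Real.mul_self_sqrt (norm_nonneg z)]
  have hbsq : (‖z + (‖z‖ : ℂ)‖ : ℂ) *
      (‖z + (‖z‖ : ℂ)‖ : ℂ)
      = (z + (‖z‖ : ℂ)) * ((starRingEnd ℂ) z + (‖z‖ : ℂ)) := by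
    have : (‖z + (‖z‖ : ℂ)‖ : ℂ) *
        (‖z + (‖z‖ : ℂ)‖ : ℂ)
        = ((Complex.normSq (z + (‖z‖ : ℂ)) : ℝ) : ℂ) := by
      rw [← Complex.ofReal_mul, ← sq, Complex.sq_norm]
    rw [this, ← Complex.mul_conj]
    simp [map_add, Complex.conj_ofReal]
  have hconj : z * ((starRingEnd ℂ) z + (‖z‖ : ℂ))
      = (‖z‖ : ℂ) * (z + (‖z‖ : ℂ)) := by
    have : z * (starRingEnd ℂ) z = ((Complex.normSq z : ℝ) : ℂ) := Complex.mul_conj z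
    have h2 : ((Complex.normSq z : ℝ) : ℂ) = (‖z‖ : ℂ) * (‖z‖ : ℂ) := by
      rw [← Complex.ofReal_mul, ← sq, Complex.sq_norm]
    rw [mul_add, this, h2]; ring
  have hcne : (starRingEnd ℂ) z + (‖z‖ : ℂ) ≠ 0 := by
    intro hc
    apply hne
    have := congrArg (starRingEnd ℂ) hc
    simpa [Complex.conj_ofReal] using this
  rw [csqrt]
  field_simp
  rw [sq, sq, sq, hsq, hbsq]
  rw [show ((‖z‖ :ℝ):ℂ) * ((z + (‖z‖ : ℂ)) * (z + (‖z‖ : ℂ)))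
      = ((‖z‖ :ℝ):ℂ) * (z + (‖z‖ : ℂ)) * (z + (‖z‖ : ℂ)) by ring,
    ← hconj]
  ring

lemma cpow_half_sq {z : ℂ} (hz : z ≠ 0) : z ^ ((1:ℂ)/2) * z ^ ((1:ℂ)/2) = z := by
  rw [← Complex.cpow_add _ _ hz]
  norm_num

lemma cpow_half_re_pos {z : ℂ} (h : 0 < z.re ∨ z.im ≠ 0) : 0 < (z ^ ((1:ℂ)/2)).re := by
  have hz := aux_ne_zero h
  rw [Complex.cpow_def_of_ne_zero hz]
  rw [Complex.exp_re]
  have harg : (Complex.log z * ((1:ℂ)/2)).im = Complex.arg z / 2 := by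
    simp [Complex.mul_im, Complex.log_im]
    ring
  rw [harg]
  have hlt : |Complex.arg z| < Real.pi := by
    rcases Complex.abs_arg_le_pi z with hle
    rcases lt_or_eq_of_le hle with h1 | h1
    · exact h1
    · exfalso
      have : Complex.arg z = Real.pi ∨ Complex.arg z = -Real.pi := abs_eq (le_of_lt Real.pi_pos) |>.mp h1
      rcases this with h2 | h2
      · have := Complex.arg_eq_pi_iff.mp h2
        rcases h with h3 | h3
        · linarith [this.1]
        · exact h3 this.2
      · linarith [Complex.neg_pi_lt_arg z, h2]
  have hcos : 0 < Real.cos (Complex.arg z / 2) := by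
    apply Real.cos_pos_of_mem_Ioo
    constructor
    · have := abs_lt.mp hlt; linarith [this.1]
    · have := abs_lt.mp hlt; linarith [this.2]
  positivity

lemma csqrt_eq_cpow {z : ℂ} (h : 0 < z.re ∨ z.im ≠ 0) : csqrt z = z ^ ((1:ℂ)/2) := by
  have hz := aux_ne_zero h
  have h1 := csqrt_sq h
  have h2 := cpow_half_sq hz
  have key : (csqrt z - z ^ ((1:ℂ)/2)) * (csqrt z + z ^ ((1:ℂ)/2)) = 0 := by
    rw [mul_comm] at h1 h2 ⊢
    ring_nf
    rw [sq, sq, h1, h2]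
    ring
  rcases mul_eq_zero.mp key with hk | hk
  · exact sub_eq_zero.mp hk
  · exfalso
    have : (csqrt z + z ^ ((1:ℂ)/2)).re = 0 := by rw [hk]; simp
    simp only [Complex.add_re] at this
    linarith [csqrt_re_pos h, cpow_half_re_pos h]

lemma csqrt_real_sq_mul (t : ℝ) (ht : 0 ≤ t) (z : ℂ) :
    csqrt (((t^2 : ℝ) : ℂ) * z) = (t : ℂ) * csqrt z := by
  rcases eq_or_lt_of_le ht with rfl | htpos
  · simp [csqrt]
  have h1 : ‖((t^2 : ℝ) : ℂ) * z‖ = t^2 * ‖z‖ := by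
    rw [norm_mul, Complex.norm_real, Real.norm_eq_abs, _root_.abs_of_nonneg (sq_nonneg t)]
  have h2 : Real.sqrt (t^2 * ‖z‖) = t * Real.sqrt (‖z‖) := by
    rw [Real.sqrt_mul (sq_nonneg t), Real.sqrt_sq ht]
  have h3 : ((t^2 : ℝ) : ℂ) * z + ((t^2 * ‖z‖ : ℝ) : ℂ)
      = ((t^2 : ℝ) : ℂ) * (z + (‖z‖ : ℂ)) := by push_cast; ring
  have h4 : ‖((t^2 : ℝ) : ℂ) * (z + (‖z‖ : ℂ))‖
      = t^2 * ‖z + (‖z‖ : ℂ)‖ := by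
    rw [norm_mul, Complex.norm_real, Real.norm_eq_abs, _root_.abs_of_nonneg (sq_nonneg t)]
  rw [csqrt, csqrt, h1, h2, h3, h4]
  rcases eq_or_ne (z + (‖z‖ : ℂ)) 0 with hz | hz
  · simp [hz]
  · have hb : ‖z + (‖z‖ : ℂ)‖ ≠ 0 := norm_ne_zero_iff.mpr hz
    have htne : (t : ℂ) ≠ 0 := by exact_mod_cast ne_of_gt htpos
    push_cast
    rw [mul_div_mul_left _ _ (pow_ne_zero 2 htne)]
    ring

/-- factorization of the bilinear form `⟨d−zp, d−zp⟩`, avoidance of `ℝ_{≤0}`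
on `U_dp`, and well-definedness, holomorphy and range of the extension
`n_dp(z) = √⟨d−zp, d−zp⟩ = ‖p‖·√((w−z)(w̄−z))` of the Euclidean norm. -/
theorem stmt0 (n : ℕ) (d p : Fin n → ℝ) (hp : p ≠ 0)
    (wr : ℝ) (hwr : wr = (∑ j, d j * p j) / (euclNorm p) ^ 2)
    (wi : ℝ) (hwi : wi = Real.sqrt ((euclNorm d) ^ 2 / (euclNorm p) ^ 2 - wr ^ 2))
    (w : ℂ) (hw : w = (wr : ℂ) + (wi : ℂ) * Complex.I)
    (U : Set ℂ) (hU : U = {z : ℂ | ¬ (z.re = wr ∧ wi ≤ |z.im|)})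
    (S : ℂ → ℂ)
    (hS : S = fun z => ∑ j, ((d j : ℂ) - z * (p j : ℂ)) * ((d j : ℂ) - z * (p j : ℂ)))
    (ndp : ℂ → ℂ) (hndp : ndp = fun z => csqrt (S z)) :
    (∀ z : ℂ, S z = ((euclNorm p : ℝ) : ℂ) ^ 2 * (w - z) * ((starRingEnd ℂ) w - z)) ∧
    (∀ z ∈ U, ¬ ∃ r : ℝ, r ≤ 0 ∧ S z = (r : ℂ)) ∧
    (∀ z ∈ U, ndp z = ((euclNorm p : ℝ) : ℂ) * csqrt ((w - z) * ((starRingEnd ℂ) w - z))) ∧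
    DifferentiableOn ℂ ndp U ∧
    (∀ z ∈ U, 0 < (ndp z).re) := by
  -- real preliminaries
  have hPdef : (euclNorm p) ^ 2 = ∑ j, (p j) ^ 2 := by
    rw [euclNorm]; exact Real.sq_sqrt (Finset.sum_nonneg fun j _ => sq_nonneg _)
  have hDdef : (euclNorm d) ^ 2 = ∑ j, (d j) ^ 2 := by
    rw [euclNorm]; exact Real.sq_sqrt (Finset.sum_nonneg fun j _ => sq_nonneg _)
  have hPpos : 0 < ∑ j, (p j) ^ 2 := by
    obtain ⟨j, hj⟩ := Function.ne_iff.mp hp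
    exact Finset.sum_pos' (fun i _ => sq_nonneg _) ⟨j, Finset.mem_univ j, by simpa using sq_pos_of_ne_zero hj⟩
  have hCS : (∑ j, d j * p j) ^ 2 ≤ (∑ j, (d j) ^ 2) * ∑ j, (p j) ^ 2 :=
    Finset.sum_mul_sq_le_sq_mul_sq Finset.univ d p
  have hwr' : (∑ j, (p j) ^ 2) * wr = ∑ j, d j * p j := by
    rw [hwr, hPdef]; field_simp
  have hwi2 : wi ^ 2 = (∑ j, (d j) ^ 2) / (∑ j, (p j) ^ 2) - wr ^ 2 := by
    rw [hwi, hDdef, hPdef]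
    apply Real.sq_sqrt
    rw [sub_nonneg, hwr, hPdef, div_pow, div_le_div_iff₀ (by positivity) hPpos]
    nlinarith [hCS, hPpos]
  have hwi0 : 0 ≤ wi := by rw [hwi]; exact Real.sqrt_nonneg _
  have hDid : (∑ j, (p j) ^ 2) * (wr ^ 2 + wi ^ 2) = ∑ j, (d j) ^ 2 := by
    rw [hwi2]; field_simp; ring
  have hw' : (starRingEnd ℂ) w = (wr : ℂ) - (wi : ℂ) * Complex.I := by
    rw [hw, map_add, map_mul, Complex.conj_ofReal, Complex.conj_ofReal, Complex.conj_I]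
    ring
  -- part (a)
  have hA : ∀ z : ℂ, S z = ((euclNorm p : ℝ) : ℂ) ^ 2 * (w - z) * ((starRingEnd ℂ) w - z) := by
    intro z
    have hSz : S z = ((∑ j, (d j)^2 : ℝ) : ℂ) - 2 * z * ((∑ j, d j * p j : ℝ) : ℂ)
        + z ^ 2 * ((∑ j, (p j)^2 : ℝ) : ℂ) := by
      rw [hS]
      push_cast
      rw [Finset.mul_sum, Finset.mul_sum, ← Finset.sum_sub_distrib, ← Finset.sum_add_distrib]
      exact Finset.sum_congr rfl (fun j _ => by ring)
    have hPc : ((euclNorm p : ℝ) : ℂ) ^ 2 = ((∑ j, (p j)^2 : ℝ) : ℂ) := by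
      exact_mod_cast congrArg (Complex.ofReal) hPdef
    have hCc : ((∑ j, (p j)^2 : ℝ) : ℂ) * (wr : ℂ) = ((∑ j, d j * p j : ℝ) : ℂ) := by
      exact_mod_cast congrArg (Complex.ofReal) hwr'
    have hDc : ((∑ j, (p j)^2 : ℝ) : ℂ) * ((wr:ℂ) ^ 2 + (wi:ℂ) ^ 2)
        = ((∑ j, (d j)^2 : ℝ) : ℂ) := by
      exact_mod_cast congrArg (Complex.ofReal) hDid
    rw [hSz, hPc, hw', hw]
    linear_combination -hDc + 2 * z * hCc
      + ((∑ j, (p j)^2 : ℝ) : ℂ) * ((wi:ℝ):ℂ) ^ 2 * Complex.I_sq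
  -- part (b)
  have hB : ∀ z ∈ U, ¬ ∃ r : ℝ, r ≤ 0 ∧ S z = (r : ℂ) := by
    intro z hz ⟨r, hr, hrz⟩
    rw [hU] at hz
    simp only [mem_setOf_eq] at hz
    push_neg at hz
    have hE : ((∑ j, (p j)^2 : ℝ) : ℂ) * ((w - z) * ((starRingEnd ℂ) w - z)) = (r : ℂ) := by
      rw [← hrz, hA z]
      rw [show ((euclNorm p : ℝ) : ℂ) ^ 2 = ((∑ j, (p j)^2 : ℝ) : ℂ) from
        by exact_mod_cast congrArg (Complex.ofReal) hPdef]
      ring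
    have hQre : ((w - z) * ((starRingEnd ℂ) w - z)).re
        = (wr - z.re) ^ 2 + wi ^ 2 - z.im ^ 2 := by
      rw [hw', hw]
      simp [Complex.mul_re, Complex.sub_re, Complex.sub_im, Complex.add_re, Complex.add_im,
        Complex.mul_im]
      ring
    have hQim : ((w - z) * ((starRingEnd ℂ) w - z)).im = -2 * (wr - z.re) * z.im := by
      rw [hw', hw]
      simp [Complex.mul_re, Complex.sub_re, Complex.sub_im, Complex.add_re, Complex.add_im,
        Complex.mul_im]
      ring
    have h1 := congrArg Complex.re hE
    have h2 := congrArg Complex.im hE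
    rw [Complex.re_ofReal_mul, hQre, Complex.ofReal_re] at h1
    rw [Complex.im_ofReal_mul, hQim, Complex.ofReal_im] at h2
    have hfac : (wr - z.re) * z.im = 0 := by
      have := mul_eq_zero.mp h2
      rcases this with h | h
      · exact absurd h (ne_of_gt hPpos)
      · linear_combination (-1/2 : ℝ) * h
    have hQreNP : (wr - z.re) ^ 2 + wi ^ 2 - z.im ^ 2 ≤ 0 := by
      by_contra hpos
      push_neg at hpos
      have := mul_pos hPpos hpos
      linarith
    rcases mul_eq_zero.mp hfac with h | h
    · have hx : z.re = wr := by linarith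
      have hy := hz hx
      have hy2 : z.im ^ 2 < wi ^ 2 :=
        sq_lt_sq' (by linarith [neg_abs_le z.im]) (by linarith [le_abs_self z.im])
      have hzero : (wr - z.re) ^ 2 = 0 := by rw [hx]; ring
      linarith
    · rw [h] at hQreNP
      have hsq : (wr - z.re) ^ 2 = 0 :=
        le_antisymm (by simp at hQreNP; nlinarith [sq_nonneg wi]) (sq_nonneg _)
      have hx : z.re = wr := by
        have := pow_eq_zero_iff (n := 2) (by norm_num) |>.mp hsq
        linarith [this]
      have hy := hz hx
      rw [h] at hy
      simp at hy
      have hw2 : 0 < wi ^ 2 := pow_pos hy 2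
      simp at hQreNP
      linarith
  -- condition for csqrt lemmas
  have hcond : ∀ z ∈ U, 0 < (S z).re ∨ (S z).im ≠ 0 := by
    intro z hz
    by_contra hc
    push_neg at hc
    exact hB z hz ⟨(S z).re, hc.1, (Complex.ext (by simp) (by simp [hc.2])).symm⟩
  have hPn0 : 0 ≤ euclNorm p := by rw [euclNorm]; exact Real.sqrt_nonneg _
  -- part (c1)
  have hC1 : ∀ z ∈ U, ndp z
      = ((euclNorm p : ℝ) : ℂ) * csqrt ((w - z) * ((starRingEnd ℂ) w - z)) := by
    intro z _
    rw [hndp]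
    simp only
    rw [hA z, show ((euclNorm p : ℝ) : ℂ) ^ 2 * (w - z) * ((starRingEnd ℂ) w - z)
      = ((((euclNorm p) ^ 2 : ℝ)) : ℂ) * ((w - z) * ((starRingEnd ℂ) w - z)) from by
        push_cast; ring]
    exact csqrt_real_sq_mul (euclNorm p) hPn0 _
  -- differentiability of S
  have hdiffS : Differentiable ℂ S := by
    rw [hS]
    apply Differentiable.fun_sum
    intro j _
    apply Differentiable.mul <;>
      exact (differentiable_const _).sub ((differentiable_id).mul (differentiable_const _))
  have hC2 : DifferentiableOn ℂ ndp U := by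
    have hD2 : DifferentiableOn ℂ (fun z => S z ^ ((1:ℂ)/2)) U := fun z hz =>
      (DifferentiableAt.cpow (hdiffS z) (differentiableAt_const _)
        (hcond z hz)).differentiableWithinAt
    exact hD2.congr (fun z hz => by rw [hndp]; exact csqrt_eq_cpow (hcond z hz))
  have hC3 : ∀ z ∈ U, 0 < (ndp z).re := by
    intro z hz
    rw [hndp]
    exact csqrt_re_pos (hcond z hz)
  exact ⟨hA, hB, hC1, hC2, hC3⟩
end

section
/- Let n ∈ ℕ and d, p ∈ ℝⁿ with p ≠ 0. Then for every real t one has |w − t| = ‖d − tp‖ / ‖p‖. -/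
open Complex Set

/-- with `w = w_r + i·w_i` as in the construction of the holomorphic
extension of the Euclidean norm, one has `|w − t| = ‖d − tp‖ / ‖p‖` for all real `t`. -/
theorem stmt1 (n : ℕ) (d p : Fin n → ℝ) (hp : p ≠ 0)
    (wr : ℝ) (hwr : wr = (∑ j, d j * p j) / (euclNorm p) ^ 2)
    (wi : ℝ) (hwi : wi = Real.sqrt ((euclNorm d) ^ 2 / (euclNorm p) ^ 2 - wr ^ 2))
    (w : ℂ) (hw : w = (wr : ℂ) + (wi : ℂ) * Complex.I) :
    ∀ t : ℝ, ‖w - (t : ℂ)‖ = euclNorm (d - t • p) / euclNorm p := by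
  intro t
  set D := ∑ j, (d j) ^ 2 with hD
  set P := ∑ j, (p j) ^ 2 with hP
  set S := ∑ j, d j * p j with hS
  have hDnn : 0 ≤ D := Finset.sum_nonneg fun j _ => sq_nonneg _
  have hPnn : 0 ≤ P := Finset.sum_nonneg fun j _ => sq_nonneg _
  have hPpos : 0 < P := by
    rcases hPnn.lt_or_eq with h | h
    · exact h
    · exfalso; apply hp
      funext j
      have := (Finset.sum_eq_zero_iff_of_nonneg (fun j _ => sq_nonneg (p j))).mp h.symm j
        (Finset.mem_univ j)
      exact pow_eq_zero_iff (by norm_num) |>.mp this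
  have hnp2 : (euclNorm p) ^ 2 = P := Real.sq_sqrt hPnn
  have hnd2 : (euclNorm d) ^ 2 = D := Real.sq_sqrt hDnn
  have hCS : S ^ 2 ≤ D * P := by
    simpa [hS, hD, hP] using Finset.sum_mul_sq_le_sq_mul_sq Finset.univ d p
  have hwr' : wr = S / P := by rw [hwr, hnp2]
  have hkey : (S / P) ^ 2 ≤ D / P := by
    rw [div_pow, div_le_div_iff₀ (by positivity) hPpos]
    nlinarith
  have hwi2 : wi ^ 2 = D / P - (S / P) ^ 2 := by
    rw [hwi, Real.sq_sqrt, hnd2, hnp2, hwr']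
    rw [hnd2, hnp2, hwr']
    linarith
  have hqnn : 0 ≤ D - 2 * t * S + t ^ 2 * P := by nlinarith [hCS, sq_nonneg (t * P - S), hPpos]
  have hrhs : euclNorm (d - t • p) = Real.sqrt (D - 2 * t * S + t ^ 2 * P) := by
    unfold euclNorm
    congr 1
    rw [hD, hS, hP, Finset.mul_sum, Finset.mul_sum, ← Finset.sum_sub_distrib,
      ← Finset.sum_add_distrib]
    apply Finset.sum_congr rfl
    intro j _
    simp [Pi.sub_apply, Pi.smul_apply, smul_eq_mul]
    ring
  have habs : ‖w - (t : ℂ)‖ = Real.sqrt ((wr - t) ^ 2 + wi ^ 2) := by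
    rw [hw]
    rw [Complex.norm_def, Complex.normSq_apply]
    congr 1
    simp [Complex.add_re, Complex.add_im]
    ring
  rw [habs, hrhs]
  have : (wr - t) ^ 2 + wi ^ 2 = (D - 2 * t * S + t ^ 2 * P) / P := by
    rw [hwi2, hwr']
    field_simp
    ring
  rw [this, Real.sqrt_div hqnn]
  have hnp : euclNorm p = Real.sqrt P := rfl
  rw [hnp]
end

section
/- Let r > 0 and set ρ := √(r²+1) + r. Then the closure of the Bernstein elliptic disc D_ρ is contained in U_r. -/
open Complex Set

/-- The Bernstein elliptic disc `D_ρ`. -/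
def bernDisc (ρ : ℝ) : Set ℂ :=
  {z : ℂ | (2 * z.re / (ρ + 1 / ρ)) ^ 2 + (2 * z.im / (ρ - 1 / ρ)) ^ 2 < 1}

/-- The closed `r`-neighborhood `U_r` of the interval `[−1,1]` in `ℂ`. -/
def UrSet (r : ℝ) : Set ℂ :=
  {z : ℂ | ∃ t ∈ Set.Icc (-1 : ℝ) 1, ‖z - (t : ℂ)‖ ≤ r}

/-- inclusion: for `r > 0` and `ρ := √(r²+1) + r`, the closure of the
Bernstein elliptic disc `D_ρ` is contained in `U_r`. -/
theorem stmt7 (r : ℝ) (hr : 0 < r) (ρ : ℝ) (hρ : ρ = Real.sqrt (r ^ 2 + 1) + r) :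
    closure (bernDisc ρ) ⊆ UrSet r := by
  set s := Real.sqrt (r ^ 2 + 1) with hsdef
  have hs2 : s ^ 2 = r ^ 2 + 1 := Real.sq_sqrt (by positivity)
  have hs1 : 1 ≤ s := by nlinarith [Real.sqrt_nonneg (r ^ 2 + 1)]
  have hsr : s ≤ r + 1 := by nlinarith
  have hρpos : 0 < ρ := by rw [hρ]; linarith
  have hinv : 1 / ρ = s - r := by
    rw [eq_comm, eq_div_iff hρpos.ne', hρ]; nlinarith
  have hsum : ρ + 1 / ρ = 2 * s := by rw [hinv, hρ]; ring
  have hdiff : ρ - 1 / ρ = 2 * r := by rw [hinv, hρ]; ring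
  have hspos : (0:ℝ) < s := by linarith
  have hkey : closure (bernDisc ρ) ⊆
      {z : ℂ | (2 * z.re / (ρ + 1 / ρ)) ^ 2 + (2 * z.im / (ρ - 1 / ρ)) ^ 2 ≤ 1} := by
    apply closure_minimal
    · intro z hz
      simp only [bernDisc, Set.mem_setOf_eq] at hz ⊢
      exact hz.le
    · have hc : Continuous fun z : ℂ =>
          (2 * z.re / (ρ + 1 / ρ)) ^ 2 + (2 * z.im / (ρ - 1 / ρ)) ^ 2 := by fun_prop
      exact isClosed_le hc continuous_const
  intro z hz
  have hz' := hkey hz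
  simp only [Set.mem_setOf_eq, hsum, hdiff] at hz'
  have hx : (z.re / s) ^ 2 + (z.im / r) ^ 2 ≤ 1 := by
    have h1 : 2 * z.re / (2 * s) = z.re / s := by field_simp
    have h2 : 2 * z.im / (2 * r) = z.im / r := by field_simp
    rwa [h1, h2] at hz'
  set x := z.re
  set y := z.im
  refine ⟨x / s, ?_, ?_⟩
  · constructor
    · nlinarith [sq_nonneg (y / r), sq_nonneg (x / s + 1)]
    · nlinarith [sq_nonneg (y / r), sq_nonneg (x / s - 1)]
  · have habs : (‖z - (x / s : ℝ)‖) ^ 2 = (x - x / s) ^ 2 + y ^ 2 := by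
      rw [Complex.sq_norm, Complex.normSq_apply]
      simp [x, y]
      ring
    have hle : (x - x / s) ^ 2 + y ^ 2 ≤ r ^ 2 := by
      have hxs : x - x / s = x * (s - 1) / s := by field_simp
      rw [hxs]
      set u : ℝ := x ^ 2 / s ^ 2 with hu
      have hunn : 0 ≤ u := by positivity
      have hy : y ^ 2 ≤ r ^ 2 * (1 - u) := by
        have h0 : (y / r) ^ 2 ≤ 1 - (x / s) ^ 2 := by linarith
        have h1 : y ^ 2 / r ^ 2 ≤ 1 - u := by
          rw [div_pow] at h0; rw [hu]; convert h0 using 2; rw [div_pow]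
        calc y ^ 2 = y ^ 2 / r ^ 2 * r ^ 2 := by field_simp
          _ ≤ (1 - u) * r ^ 2 := mul_le_mul_of_nonneg_right h1 (by positivity)
          _ = r ^ 2 * (1 - u) := by ring
      have hg : (x * (s - 1) / s) ^ 2 = u * (s - 1) ^ 2 := by rw [hu]; ring
      rw [hg]
      have hsq : (s - 1) ^ 2 ≤ r ^ 2 := by nlinarith
      have h2 : u * (s - 1) ^ 2 ≤ u * r ^ 2 := mul_le_mul_of_nonneg_left hsq hunn
      have h3 : r ^ 2 * (1 - u) = r ^ 2 - u * r ^ 2 := by ring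
      linarith
    have := Real.sqrt_le_sqrt hle
    rw [Real.sqrt_sq hr.le] at this
    calc ‖z - (x / s : ℝ)‖ = Real.sqrt ((‖z - (x / s : ℝ)‖) ^ 2) := by
            rw [Real.sqrt_sq (norm_nonneg _)]
      _ = Real.sqrt ((x - x / s) ^ 2 + y ^ 2) := by rw [habs]
      _ ≤ r := this
end

section
/- Let −1 ≤ a < b ≤ 1, h := (b−a)/2, and fix ε ∈ (0,1). Then there exists ρ₀ > 1, depending only on ε, such that for all ρ ≥ ρ₀ one has (1−ε)ρ/h > 1 and Φ_{[a,b]}(D_{(1−ε)ρ/h}) ⊆ D_ρ. -/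
open Complex Set

/-- Key ellipse containment lemma (full-diameter form). -/
lemma ellipse_key (lam c P Q A B x y : ℝ) (hlam0 : 0 < lam) (hlam1 : lam ≤ 1)
    (hA : 0 < A) (hB : 0 < B) (hP : 0 < P) (hQ : 0 < Q)
    (h1 : A ≤ lam * P) (h2 : B ≤ lam * Q) (hc : 2 * |c| ≤ (1 - lam) * P)
    (hz : (2 * x / A) ^ 2 + (2 * y / B) ^ 2 < 1) :
    (2 * (c + x) / P) ^ 2 + (2 * y / Q) ^ 2 < 1 := by
  set t : ℝ := 2 * |x| / A with htdef
  set s : ℝ := 2 * |y| / B with hsdef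
  have ht0 : 0 ≤ t := by positivity
  have hs0 : 0 ≤ s := by positivity
  have hts : t ^ 2 + s ^ 2 < 1 := by
    have e1 : t ^ 2 = (2 * x / A) ^ 2 := by
      rw [htdef, div_pow, div_pow, mul_pow, mul_pow, _root_.sq_abs]
    have e2 : s ^ 2 = (2 * y / B) ^ 2 := by
      rw [hsdef, div_pow, div_pow, mul_pow, mul_pow, _root_.sq_abs]
    rw [e1, e2]; exact hz
  have ht1 : t < 1 := by nlinarith [sq_nonneg s, sq_nonneg t]
  have hxA : 2 * |x| = t * A := by rw [htdef]; field_simp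
  have hyB : 2 * |y| = s * B := by rw [hsdef]; field_simp
  have hx1 : |2 * (c + x)| ≤ ((1 - lam) + lam * t) * P := by
    have habs : |2 * (c + x)| ≤ 2 * |c| + 2 * |x| := by
      rw [show (2:ℝ) * (c + x) = 2*c + 2*x by ring]
      calc |2*c + 2*x| ≤ |2*c| + |2*x| := abs_add_le _ _
        _ = 2*|c| + 2*|x| := by
            rw [abs_mul, abs_mul, _root_.abs_two]
    have h2x : 2 * |x| ≤ lam * t * P := by
      rw [hxA]
      nlinarith [mul_le_mul_of_nonneg_left h1 ht0]
    calc |2 * (c + x)| ≤ 2*|c| + 2*|x| := habs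
      _ ≤ (1 - lam) * P + lam * t * P := add_le_add hc h2x
      _ = ((1 - lam) + lam * t) * P := by ring
  have hy1 : |2 * y| ≤ lam * s * Q := by
    rw [show |2*y| = 2*|y| by rw [abs_mul, _root_.abs_two], hyB]
    nlinarith [mul_le_mul_of_nonneg_left h2 hs0]
  have hlt0 : 0 ≤ (1 - lam) + lam * t := by nlinarith
  have e3 : (2 * (c + x) / P) ^ 2 ≤ ((1 - lam) + lam * t) ^ 2 := by
    rw [div_pow, div_le_iff₀ (by positivity : (0:ℝ) < P ^ 2)]
    calc (2 * (c+x))^2 = |2 * (c+x)|^2 := (_root_.sq_abs _).symm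
      _ ≤ (((1 - lam) + lam * t) * P)^2 := by
          apply pow_le_pow_left₀ (abs_nonneg _) hx1
      _ = ((1 - lam) + lam * t)^2 * P^2 := by ring
  have e4 : (2 * y / Q) ^ 2 ≤ (lam * s) ^ 2 := by
    rw [div_pow, div_le_iff₀ (by positivity : (0:ℝ) < Q ^ 2)]
    calc (2 * y)^2 = |2 * y|^2 := (_root_.sq_abs _).symm
      _ ≤ (lam * s * Q)^2 := by
          apply pow_le_pow_left₀ (abs_nonneg _) hy1
      _ = (lam * s)^2 * Q^2 := by ring
  have key2 : lam^2 * (t^2 + s^2) < lam^2 * 1 :=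
    mul_lt_mul_of_pos_left hts (by positivity)
  nlinarith [key2, mul_nonneg (mul_nonneg hlam0.le (sub_nonneg.2 hlam1)) (sub_nonneg.2 ht1.le)]

set_option maxHeartbeats 1000000 in
/-- inclusion of transformed Bernstein discs: for fixed `ε ∈ (0,1)` there
is `ρ₀ > 1`, depending only on `ε`, such that for all `−1 ≤ a < b ≤ 1` with
`h = (b−a)/2` and all `ρ ≥ ρ₀` one has `(1−ε)ρ/h > 1` and
`Φ_{[a,b]}(D_{(1−ε)ρ/h}) ⊆ D_ρ`. -/
theorem stmt13 (ε : ℝ) (hε0 : 0 < ε) (hε1 : ε < 1) :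
    ∃ ρ₀ : ℝ, 1 < ρ₀ ∧
      ∀ a b : ℝ, -1 ≤ a → a < b → b ≤ 1 →
        ∀ ρ : ℝ, ρ₀ ≤ ρ →
          1 < (1 - ε) * ρ / ((b - a) / 2) ∧
          (fun z : ℂ => (((b + a) / 2 : ℝ) : ℂ) + (((b - a) / 2 : ℝ) : ℂ) * z) ''
              bernDisc ((1 - ε) * ρ / ((b - a) / 2)) ⊆ bernDisc ρ := by
  have hε' : 0 < 1 - ε := by linarith
  have hd : 0 < ε * (1 - ε) := by positivity
  refine ⟨4 / (ε * (1 - ε)), ?_, ?_⟩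
  · rw [lt_div_iff₀ hd]; nlinarith [sq_nonneg (ε - 1/2)]
  intro a b ha hab hb ρ hρ
  set h : ℝ := (b - a) / 2 with hhdef
  have hh0 : 0 < h := by rw [hhdef]; linarith
  have hh1 : h ≤ 1 := by rw [hhdef]; linarith
  have hρpos : 0 < ρ := lt_of_lt_of_le (by positivity) hρ
  have hρ4 : 4 ≤ ε * (1 - ε) * ρ := by
    rw [div_le_iff₀ hd] at hρ; linarith
  have hερ : 4 ≤ ε * ρ := by
    nlinarith [mul_nonneg (mul_nonneg hε0.le hε0.le) hρpos.le]
  have hρ16 : 16 ≤ ρ := by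
    nlinarith [mul_nonneg hρpos.le (sq_nonneg (ε - 1/2))]
  have hρ1 : 1 < ρ := by linarith
  have hX4 : 4 ≤ (1 - ε) * ρ := by
    nlinarith [mul_nonneg (sq_nonneg (1 - ε)) hρpos.le]
  set α : ℝ := (1 - ε) * ρ / h with hαdef
  have hα1 : 1 < α := by
    rw [hαdef, lt_div_iff₀ hh0]; nlinarith
  have hα0 : 0 < α := by linarith
  refine ⟨hα1, ?_⟩
  rintro w ⟨z, hz, rfl⟩
  simp only [bernDisc, mem_setOf_eq] at hz ⊢
  simp only [Complex.add_re, Complex.add_im, Complex.ofReal_re, Complex.ofReal_im,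
    Complex.mul_re, Complex.mul_im, zero_mul, mul_zero, sub_zero, zero_add, add_zero]
  -- identities for the axes
  have hhα : h * α = (1 - ε) * ρ := by
    rw [hαdef]; field_simp
  have h1α : h * (1 / α) = h ^ 2 / ((1 - ε) * ρ) := by
    rw [hαdef]; field_simp
  have hXpos : 0 < (1 - ε) * ρ := by positivity
  have ediv : h ^ 2 / ((1 - ε) * ρ) ≤ ε / 2 * ρ := by
    rw [div_le_iff₀ hXpos]
    nlinarith [mul_le_mul_of_nonneg_right hρ4 hρpos.le]
  have hdivnn : 0 ≤ h ^ 2 / ((1 - ε) * ρ) := by positivity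
  have hinvα : 0 < 1 / α := one_div_pos.2 hα0
  have hA : 0 < h * (α + 1 / α) := mul_pos hh0 (by linarith)
  have hB : 0 < h * (α - 1 / α) := by
    apply mul_pos hh0
    have : 1 / α < 1 := by rw [div_lt_one hα0]; exact hα1
    linarith
  have hP : 0 < ρ + 1 / ρ := by positivity
  have hQ : 0 < ρ - 1 / ρ := by
    have : 1 / ρ < 1 := by rw [div_lt_one hρpos]; exact hρ1
    linarith
  have h1 : h * (α + 1 / α) ≤ (1 - ε / 2) * (ρ + 1 / ρ) := by
    have expand : h * (α + 1 / α) = (1 - ε) * ρ + h ^ 2 / ((1 - ε) * ρ) := by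
      rw [mul_add, hhα, h1α]
    rw [expand]
    have hinv : 0 ≤ (1 - ε / 2) * (1 / ρ) := mul_nonneg (by linarith) (by positivity)
    have hid : (1 - ε / 2) * (ρ + 1 / ρ)
        = (1 - ε) * ρ + ε / 2 * ρ + (1 - ε / 2) * (1 / ρ) := by ring
    linarith [ediv]
  have h2 : h * (α - 1 / α) ≤ (1 - ε / 2) * (ρ - 1 / ρ) := by
    have expand : h * (α - 1 / α) = (1 - ε) * ρ - h ^ 2 / ((1 - ε) * ρ) := by
      rw [mul_sub, hhα, h1α]
    rw [expand]
    have key : (1 - ε) * ρ ≤ (1 - ε / 2) * (ρ - 1 / ρ) := by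
      have e1 : (1 - ε / 2) * (1 / ρ) ≤ 1 := by
        rw [mul_one_div, div_le_one hρpos]; linarith
      have hid : (1 - ε / 2) * (ρ - 1 / ρ)
          = (1 - ε) * ρ + ε / 2 * ρ - (1 - ε / 2) * (1 / ρ) := by ring
      linarith
    linarith
  have hc : 2 * |(b + a) / 2| ≤ (1 - (1 - ε / 2)) * (ρ + 1 / ρ) := by
    have habs : |(b + a) / 2| ≤ 1 := by
      rw [abs_le]; constructor <;> [linarith; linarith]
    have : (1 - (1 - ε / 2)) * (ρ + 1 / ρ) = ε / 2 * ρ + ε / 2 * (1 / ρ) := by ring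
    rw [this]
    have : 0 ≤ ε / 2 * (1 / ρ) := by positivity
    linarith
  have hzconv : (2 * (h * z.re) / (h * (α + 1 / α))) ^ 2
      + (2 * (h * z.im) / (h * (α - 1 / α))) ^ 2 < 1 := by
    rw [show 2 * (h * z.re) = h * (2 * z.re) by ring,
        show 2 * (h * z.im) = h * (2 * z.im) by ring,
        mul_div_mul_left _ _ hh0.ne', mul_div_mul_left _ _ hh0.ne']
    exact hz
  exact ellipse_key (1 - ε / 2) ((b + a) / 2) (ρ + 1 / ρ) (ρ - 1 / ρ)
    (h * (α + 1 / α)) (h * (α - 1 / α)) (h * z.re) (h * z.im)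
    (by linarith) (by linarith) hA hB hP hQ h1 h2 hc hzconv
end
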